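/- Let n ≥ 2 and 1 ≤ k ≤ n−1. There is no function f from boolean vectors x ∈ {0,1}^{n−1} to k-element subsets of {1,…,n} satisfying all of: (i) n ∉ f(0,…,0); (ii) for every x ≠ (0,…,0), n ∈ f(x); (iii) for every i ∈ {1,…,n−1} and every x, i ∈ f(x) ⟺ i ∈ f(x + e_i), where x + e_i denotes x with its i-th coordinate flipped. -/

import Mathlib

/-- there is no function `f` from boolean vectors in `{0,1}^{n-1}`
to `k`-element subsets of `{1,…,n}` (here `Fin n`, with agent `n` being
`⟨n-1,_⟩`) such that agent `n` is not selected at the all-zero vector, is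
selected at every other vector, and such that for each `i ∈ {1,…,n-1}` the
selection of `i` is invariant under flipping the `i`-th coordinate. -/
theorem stmt_1 (n k : ℕ) (hn : 2 ≤ n) (hk1 : 1 ≤ k) (hk2 : k ≤ n - 1) :
    ¬ ∃ f : (Fin (n - 1) → Bool) → Finset (Fin n),
      (∀ x, (f x).card = k) ∧
      ((⟨n - 1, by omega⟩ : Fin n) ∉ f (fun _ => false)) ∧
      (∀ x : Fin (n - 1) → Bool, x ≠ (fun _ => false) →
        (⟨n - 1, by omega⟩ : Fin n) ∈ f x) ∧
      (∀ (i : Fin (n - 1)) (x : Fin (n - 1) → Bool),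
        (⟨i.val, by omega⟩ : Fin n) ∈ f x ↔
          (⟨i.val, by omega⟩ : Fin n) ∈ f (Function.update x i (!x i))) := by
  rintro ⟨f, hcard, h0, hsel, hinv⟩
  have hm1 : 1 ≤ n - 1 := by omega
  set e : Fin n := ⟨n - 1, by omega⟩ with he
  have htwo : ((2 : ℕ) : ZMod 2) = 0 := by decide
  -- total sum of cards, mod 2, is 0
  have h1 : ∑ x : Fin (n-1) → Bool, ((f x).card : ZMod 2) = 0 := by
    simp only [hcard]
    rw [Finset.sum_const, Finset.card_univ, nsmul_eq_mul]
    have : (Fintype.card (Fin (n-1) → Bool) : ZMod 2) = 0 := by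
      rw [Fintype.card_fun]
      simp only [Fintype.card_bool, Fintype.card_fin, Nat.cast_pow, htwo]
      exact zero_pow (by omega)
    rw [this, zero_mul]
  -- but summing coordinatewise it is 1
  have h2 : ∑ x : Fin (n-1) → Bool, ((f x).card : ZMod 2) = 1 := by
    have hx : ∀ x : Fin (n-1) → Bool, ((f x).card : ZMod 2)
        = ∑ j : Fin n, (if j ∈ f x then (1 : ZMod 2) else 0) := by
      intro x
      rw [Finset.sum_ite_mem, Finset.univ_inter, Finset.sum_const, nsmul_eq_mul, mul_one]
    simp only [hx]
    rw [Finset.sum_comm]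
    rw [Finset.sum_eq_single_of_mem e (Finset.mem_univ e)]
    · -- contribution of agent n
      have hterm : ∀ x : Fin (n-1) → Bool, (if e ∈ f x then (1:ZMod 2) else 0)
          = 1 - (if x = (fun _ => false) then 1 else 0) := by
        intro x
        by_cases hx0 : x = (fun _ => false)
        · subst hx0; rw [if_neg h0]; simp
        · rw [if_pos (hsel x hx0)]; simp [hx0]
      simp only [hterm]
      rw [Finset.sum_sub_distrib, Finset.sum_const, Finset.card_univ, nsmul_eq_mul, mul_one]
      have hc : (Fintype.card (Fin (n-1) → Bool) : ZMod 2) = 0 := by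
        rw [Fintype.card_fun]
        simp only [Fintype.card_bool, Fintype.card_fin, Nat.cast_pow, htwo]
        exact zero_pow (by omega)
      rw [hc, Finset.sum_ite_eq' Finset.univ (fun _ => false) (fun _ => (1 : ZMod 2))]
      simp only [Finset.mem_univ, if_true]
      decide
    · -- all other agents contribute 0, by the flip involution
      intro j _ hj
      have hjv : j.val < n - 1 := by
        have := j.isLt
        rcases Nat.lt_or_ge j.val (n-1) with h | h
        · exact h
        · exfalso; exact hj (Fin.ext (by show j.val = n - 1; omega))
      set i : Fin (n-1) := ⟨j.val, hjv⟩ with hi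
      have hji : j = (⟨i.val, by omega⟩ : Fin n) := Fin.ext rfl
      rw [hji]
      refine Finset.sum_involution (fun x _ => Function.update x i (!x i)) ?_ ?_ ?_ ?_
      · intro x _
        have hiff := hinv i x
        by_cases h : (⟨i.val, by omega⟩ : Fin n) ∈ f x
        · rw [if_pos h, if_pos (hiff.mp h)]; decide
        · rw [if_neg h, if_neg (fun hh => h (hiff.mpr hh)), add_zero]
      · intro x _ _
        intro hcontra
        have hcc : Function.update x i (!x i) = x := hcontra
        have : Function.update x i (!x i) i = x i := by rw [hcc]
        simp at this
      · intro x _; exact Finset.mem_univ _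
      · intro x _
        funext j'
        by_cases hj' : j' = i
        · subst hj'; simp
        · simp [Function.update_of_ne hj']
  rw [h1] at h2
  exact zero_ne_one h2
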